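/- If θ and τ lie in two different open arcs among (-π,-π/3), (-π/3,π/3), (π/3,π), then for any b, c > 0 the kernels of ϱ_{b,θ} and ϱ_{c,τ} intersect trivially, and hence any nontrivial convex combination λϱ_{b,θ} + (1-λ)ϱ_{c,τ} (0 < λ < 1) has full rank 9. -/

import Mathlib

open Matrix Complex

noncomputable def pTheta (θ : ℝ) : ℝ :=
  max (max (2 * Real.cos (θ - 2 * Real.pi / 3)) (2 * Real.cos θ))
    (2 * Real.cos (θ + 2 * Real.pi / 3))

noncomputable def rho (b θ : ℝ) : Matrix (Fin 9) (Fin 9) ℂ :=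
  let p : ℂ := (pTheta θ : ℂ)
  let e : ℂ := Complex.exp (θ * Complex.I)
  let f : ℂ := Complex.exp (-θ * Complex.I)
  !![p, 0, 0, 0, -e, 0, 0, 0, -f;
     0, 1/(b:ℂ), 0, -f, 0, 0, 0, 0, 0;
     0, 0, (b:ℂ), 0, 0, 0, -e, 0, 0;
     0, -e, 0, (b:ℂ), 0, 0, 0, 0, 0;
     -f, 0, 0, 0, p, 0, 0, 0, -e;
     0, 0, 0, 0, 0, 1/(b:ℂ), 0, -f, 0;
     0, 0, -f, 0, 0, 0, 1/(b:ℂ), 0, 0;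
     0, 0, 0, 0, 0, -e, 0, (b:ℂ), 0;
     -e, 0, 0, 0, -f, 0, 0, 0, p]

noncomputable def arcs : Fin 3 → Set ℝ :=
  ![Set.Ioo (-Real.pi) (-(Real.pi / 3)), Set.Ioo (-(Real.pi / 3)) (Real.pi / 3),
    Set.Ioo (Real.pi / 3) Real.pi]

noncomputable def om : ℂ := Complex.exp (((2*Real.pi/3 : ℝ) : ℂ) * Complex.I)

lemma om_cube : om ^ 3 = 1 := by
  rw [om, ← Complex.exp_nat_mul,
    show ((3:ℕ):ℂ) * (((2*Real.pi/3 : ℝ):ℂ) * Complex.I) = 2*(Real.pi:ℂ)*Complex.I by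
      push_cast; ring]
  exact Complex.exp_two_pi_mul_I

lemma om_ne_one : om ≠ 1 := by
  intro h
  have him : om.im = Real.sin (2*Real.pi/3) := Complex.exp_ofReal_mul_I_im _
  rw [h] at him
  have hpi := Real.pi_pos
  have : 0 < Real.sin (2*Real.pi/3) :=
    Real.sin_pos_of_pos_of_lt_pi (by linarith) (by linarith)
  simp at him
  linarith [him ▸ this]

lemma om_quad : om ^ 2 + om + 1 = 0 := by
  have h2 : (om - 1) * (om ^ 2 + om + 1) = 0 := by linear_combination om_cube
  rcases mul_eq_zero.mp h2 with h | h
  · exact absurd (sub_eq_zero.mp h) om_ne_one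
  · exact h

lemma expper (z : ℂ) : Complex.exp (z + 2*(Real.pi:ℂ)*Complex.I) = Complex.exp z := by
  rw [Complex.exp_add, Complex.exp_two_pi_mul_I, mul_one]

lemma twocos (x : ℝ) :
    Complex.exp ((x:ℂ)*Complex.I) + Complex.exp (-(x:ℂ)*Complex.I) = ((2*Real.cos x : ℝ):ℂ) := by
  rw [Complex.exp_mul_I, show -(x:ℂ)*Complex.I = (-(x:ℂ))*Complex.I by ring, Complex.exp_mul_I]
  push_cast
  simp [Complex.cos_neg, Complex.sin_neg]
  ring

noncomputable def L0 (θ : ℝ) : ℝ := pTheta θ - 2 * Real.cos θ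
noncomputable def L1 (θ : ℝ) : ℝ := pTheta θ - 2 * Real.cos (θ + 2 * Real.pi / 3)
noncomputable def L2 (θ : ℝ) : ℝ := pTheta θ - 2 * Real.cos (θ - 2 * Real.pi / 3)

lemma maxA (θ : ℝ) : 2 * Real.cos (θ - 2 * Real.pi / 3) ≤ pTheta θ :=
  le_trans (le_max_left _ _) (le_max_left _ _)
lemma maxB (θ : ℝ) : 2 * Real.cos θ ≤ pTheta θ :=
  le_trans (le_max_right _ _) (le_max_left _ _)
lemma maxC (θ : ℝ) : 2 * Real.cos (θ + 2 * Real.pi / 3) ≤ pTheta θ := le_max_right _ _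

lemma L0_nonneg (θ : ℝ) : 0 ≤ L0 θ := sub_nonneg.mpr (maxB θ)
lemma L1_nonneg (θ : ℝ) : 0 ≤ L1 θ := sub_nonneg.mpr (maxC θ)
lemma L2_nonneg (θ : ℝ) : 0 ≤ L2 θ := sub_nonneg.mpr (maxA θ)

-- cast identities
lemma castI0 (θ : ℝ) :
    ((pTheta θ : ℝ):ℂ) - Complex.exp ((θ:ℂ)*Complex.I) - Complex.exp (-(θ:ℂ)*Complex.I)
      = ((L0 θ : ℝ):ℂ) := by
  rw [L0]; push_cast
  linear_combination (norm := (push_cast; ring1)) - twocos θ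

lemma castI1 (θ : ℝ) :
    ((pTheta θ : ℝ):ℂ) - Complex.exp ((θ:ℂ)*Complex.I) * om
      - Complex.exp (-(θ:ℂ)*Complex.I) * om^2 = ((L1 θ : ℝ):ℂ) := by
  have h1 : Complex.exp ((θ:ℂ)*Complex.I) * om
      = Complex.exp (((θ + 2*Real.pi/3 : ℝ):ℂ)*Complex.I) := by
    rw [om, ← Complex.exp_add]; congr 1; push_cast; ring
  have h2 : Complex.exp (-(θ:ℂ)*Complex.I) * om^2
      = Complex.exp (-((θ + 2*Real.pi/3 : ℝ):ℂ)*Complex.I) := by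
    rw [om, sq, ← Complex.exp_add, ← Complex.exp_add,
      show -(θ:ℂ)*Complex.I + (((2*Real.pi/3 : ℝ):ℂ)*Complex.I + ((2*Real.pi/3 : ℝ):ℂ)*Complex.I)
        = -((θ + 2*Real.pi/3 : ℝ):ℂ)*Complex.I + 2*(Real.pi:ℂ)*Complex.I by push_cast; ring]
    exact expper _
  rw [h1, h2, L1]; push_cast
  linear_combination (norm := (push_cast; ring1)) - twocos (θ + 2*Real.pi/3)

lemma castI2 (θ : ℝ) :
    ((pTheta θ : ℝ):ℂ) - Complex.exp ((θ:ℂ)*Complex.I) * om^2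
      - Complex.exp (-(θ:ℂ)*Complex.I) * om = ((L2 θ : ℝ):ℂ) := by
  have h1 : Complex.exp ((θ:ℂ)*Complex.I) * om^2
      = Complex.exp (((θ - 2*Real.pi/3 : ℝ):ℂ)*Complex.I) := by
    rw [om, sq, ← Complex.exp_add, ← Complex.exp_add,
      show (θ:ℂ)*Complex.I + (((2*Real.pi/3 : ℝ):ℂ)*Complex.I + ((2*Real.pi/3 : ℝ):ℂ)*Complex.I)
        = ((θ - 2*Real.pi/3 : ℝ):ℂ)*Complex.I + 2*(Real.pi:ℂ)*Complex.I by push_cast; ring]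
    exact expper _
  have h2 : Complex.exp (-(θ:ℂ)*Complex.I) * om
      = Complex.exp (-((θ - 2*Real.pi/3 : ℝ):ℂ)*Complex.I) := by
    rw [om, ← Complex.exp_add]; congr 1; push_cast; ring
  rw [h1, h2, L2]; push_cast
  linear_combination (norm := (push_cast; ring1)) - twocos (θ - 2*Real.pi/3)

lemma cos_lt' {x y : ℝ} (h1 : |x| < |y|) (h2 : |y| ≤ Real.pi) : Real.cos y < Real.cos x := by
  rw [← Real.cos_abs x, ← Real.cos_abs y]
  exact Real.cos_lt_cos_of_nonneg_of_le_pi (abs_nonneg x) h2 h1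

lemma arc0 {θ : ℝ} (h : θ ∈ Set.Ioo (-Real.pi) (-(Real.pi/3))) : 0 < L0 θ ∧ 0 < L2 θ := by
  obtain ⟨h1, h2⟩ := h
  have hpi := Real.pi_pos
  constructor
  · have hc : Real.cos θ < Real.cos (θ + 2*Real.pi/3) := by
      apply cos_lt'
      · rw [abs_of_neg (show θ < 0 by linarith), abs_lt]
        constructor <;> linarith
      · rw [abs_of_neg (show θ < 0 by linarith)]; linarith
    have := maxC θ
    rw [L0]; rw [show θ + 2 * Real.pi / 3 = θ + 2*Real.pi/3 by ring] at this
    linarith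
  · have hrw : Real.cos (θ - 2*Real.pi/3) = Real.cos (θ + 4*Real.pi/3) := by
      rw [show θ - 2*Real.pi/3 = (θ + 4*Real.pi/3) - 2*Real.pi by ring, Real.cos_sub_two_pi]
    have hc : Real.cos (θ + 4*Real.pi/3) < Real.cos (θ + 2*Real.pi/3) := by
      apply cos_lt'
      · rw [abs_of_pos (show 0 < θ + 4*Real.pi/3 by linarith), abs_lt]
        constructor <;> linarith
      · rw [abs_of_pos (show 0 < θ + 4*Real.pi/3 by linarith)]; linarith
    have := maxC θ
    rw [L2, show θ - 2 * Real.pi / 3 = θ - 2*Real.pi/3 by ring, hrw]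
    linarith

lemma arc1 {θ : ℝ} (h : θ ∈ Set.Ioo (-(Real.pi/3)) (Real.pi/3)) : 0 < L1 θ ∧ 0 < L2 θ := by
  obtain ⟨h1, h2⟩ := h
  have hpi := Real.pi_pos
  constructor
  · have hc : Real.cos (θ + 2*Real.pi/3) < Real.cos θ := by
      apply cos_lt'
      · rw [abs_of_pos (show 0 < θ + 2*Real.pi/3 by linarith), abs_lt]
        constructor <;> linarith
      · rw [abs_of_pos (show 0 < θ + 2*Real.pi/3 by linarith)]; linarith
    have := maxB θ
    rw [L1]; linarith
  · have hc : Real.cos (θ - 2*Real.pi/3) < Real.cos θ := by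
      apply cos_lt'
      · rw [abs_of_neg (show θ - 2*Real.pi/3 < 0 by linarith), abs_lt]
        constructor <;> linarith
      · rw [abs_of_neg (show θ - 2*Real.pi/3 < 0 by linarith)]; linarith
    have := maxB θ
    rw [L2]; linarith

lemma arc2 {θ : ℝ} (h : θ ∈ Set.Ioo (Real.pi/3) Real.pi) : 0 < L0 θ ∧ 0 < L1 θ := by
  obtain ⟨h1, h2⟩ := h
  have hpi := Real.pi_pos
  constructor
  · have hc : Real.cos θ < Real.cos (θ - 2*Real.pi/3) := by
      apply cos_lt'
      · rw [abs_of_pos (show (0:ℝ) < θ by linarith), abs_lt]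
        constructor <;> linarith
      · rw [abs_of_pos (show (0:ℝ) < θ by linarith)]; linarith
    have := maxA θ
    rw [L0]; linarith
  · have hrw : Real.cos (θ + 2*Real.pi/3) = Real.cos (θ - 4*Real.pi/3) := by
      rw [show θ + 2*Real.pi/3 = (θ - 4*Real.pi/3) + 2*Real.pi by ring, Real.cos_add_two_pi]
    have hc : Real.cos (θ - 4*Real.pi/3) < Real.cos (θ - 2*Real.pi/3) := by
      apply cos_lt'
      · rw [abs_of_neg (show θ - 4*Real.pi/3 < 0 by linarith), abs_lt]
        constructor <;> linarith
      · rw [abs_of_neg (show θ - 4*Real.pi/3 < 0 by linarith)]; linarith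
    have := maxA θ
    rw [L1, show θ + 2 * Real.pi / 3 = θ + 2*Real.pi/3 by ring, hrw]
    linarith

lemma intzero {n : ℤ} (h1 : -1 < (n:ℝ)) (h2 : (n:ℝ) < 1) : n = 0 := by
  have a1 : (-1:ℤ) < n := by exact_mod_cast h1
  have a2 : n < 1 := by exact_mod_cast h2
  omega

lemma expne {b c θ τ : ℝ} (hb : 0 < b) (hc : 0 < c) (hne : θ ≠ τ)
    (h1 : -(2*Real.pi) < θ - τ) (h2 : θ - τ < 2*Real.pi) :
    (b:ℂ) * Complex.exp ((θ:ℂ)*Complex.I) ≠ (c:ℂ) * Complex.exp ((τ:ℂ)*Complex.I) := by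
  have hpi := Real.pi_pos
  intro hEq
  have habs : b = c := by
    have h := congrArg (fun z : ℂ => ‖z‖) hEq
    simpa [norm_mul, Complex.norm_exp_ofReal_mul_I,
      abs_of_pos hb, abs_of_pos hc] using h
  subst habs
  have hexp : Complex.exp ((θ:ℂ)*Complex.I) = Complex.exp ((τ:ℂ)*Complex.I) :=
    mul_left_cancel₀ (Complex.ofReal_ne_zero.mpr hb.ne') hEq
  rw [Complex.exp_eq_exp_iff_exists_int] at hexp
  obtain ⟨n, hn⟩ := hexp
  have him := congrArg Complex.im hn
  simp [Complex.add_im, Complex.mul_im, Complex.mul_re] at him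
  -- him should say θ = τ + n * (2π)
  have hn0 : n = 0 := by
    apply intzero
    · nlinarith
    · nlinarith
  rw [hn0] at him
  simp at him
  exact hne him

lemma coslt1 {x : ℝ} (hx : x ≠ 0) (h1 : -(2*Real.pi) < x) (h2 : x < 2*Real.pi) :
    Real.cos x < 1 := by
  refine lt_of_le_of_ne (Real.cos_le_one x) (fun hcos => ?_)
  obtain ⟨n, hn⟩ := (Real.cos_eq_one_iff x).mp hcos
  have hpi := Real.pi_pos
  have hn0 : n = 0 := by
    apply intzero
    · nlinarith
    · nlinarith
  rw [hn0] at hn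
  simp at hn
  exact hx hn.symm

lemma sum9 {M : Type*} [AddCommMonoid M] (f : Fin 9 → M) :
    ∑ i, f i = f 0 + f 1 + f 2 + f 3 + f 4 + f 5 + f 6 + f 7 + f 8 := by
  simp [Fin.sum_univ_succ, add_assoc]

lemma rowext (M : Matrix (Fin 9) (Fin 9) ℂ) (v : Fin 9 → ℂ) (h : M.mulVec v = 0) (i : Fin 9) :
    M i 0 * v 0 + M i 1 * v 1 + M i 2 * v 2 + M i 3 * v 3 + M i 4 * v 4 + M i 5 * v 5
      + M i 6 * v 6 + M i 7 * v 7 + M i 8 * v 8 = 0 := by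
  have h0 : ∑ j, M i j * v j = 0 := congrFun h i
  rwa [sum9] at h0

lemma comboA {P E F v0 v4 v8 : ℂ}
    (e0 : P*v0 - E*v4 - F*v8 = 0) (e4 : -(F*v0) + P*v4 - E*v8 = 0)
    (e8 : -(E*v0) - F*v4 + P*v8 = 0) :
    (P - E - F) * (v0 + v4 + v8) = 0 ∧
    (P - E*om - F*om^2) * (v0 + om^2*v4 + om*v8) = 0 ∧
    (P - E*om^2 - F*om) * (v0 + om*v4 + om^2*v8) = 0 := by
  refine ⟨by linear_combination e0 + e4 + e8,
    by linear_combination e0 + om^2*e4 + om*e8 - ((E + F*om)*v4 + F*v8)*om_cube,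
    by linear_combination e0 + om*e4 + om^2*e8 - (E*v4 + (E*om + F)*v8)*om_cube⟩

lemma solveA {v0 v4 v8 : ℂ}
    (a0 : v0 + v4 + v8 = 0) (a1 : v0 + om^2*v4 + om*v8 = 0) (a2 : v0 + om*v4 + om^2*v8 = 0) :
    v0 = 0 ∧ v4 = 0 ∧ v8 = 0 := by
  refine ⟨by linear_combination (a0 + a1 + a2)/3 - ((v4 + v8)/3)*om_quad,
    by linear_combination (a0 + om*a1 + om^2*a2)/3 - ((v0 + v8)/3)*om_quad
        - ((2*v4 + om*v8)/3)*om_cube,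
    by linear_combination (a0 + om^2*a1 + om*a2)/3 - ((v0 + v4)/3)*om_quad
        - ((om*v4 + 2*v8)/3)*om_cube⟩

set_option maxHeartbeats 1600000 in
lemma master (b c θ τ : ℝ) (hb : 0 < b) (hc : 0 < c)
    (hθ1 : -Real.pi < θ) (hθ2 : θ < Real.pi) (hτ1 : -Real.pi < τ) (hτ2 : τ < Real.pi)
    (hne : θ ≠ τ)
    (K0 : 0 < L0 θ ∨ 0 < L0 τ) (K1 : 0 < L1 θ ∨ 0 < L1 τ) (K2 : 0 < L2 θ ∨ 0 < L2 τ) :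
    (∀ v : Fin 9 → ℂ, (rho b θ).mulVec v = 0 → (rho c τ).mulVec v = 0 → v = 0) ∧
    ∀ l : ℝ, 0 < l → l < 1 →
      ((l : ℂ) • rho b θ + ((1 - l : ℝ) : ℂ) • rho c τ).rank = 9 := by
  have hpi := Real.pi_pos
  constructor
  · intro v hv hw
    have rt0 : (pTheta θ : ℂ) * v 0 - Complex.exp ((θ:ℂ)*Complex.I) * v 4 - Complex.exp (-(θ:ℂ)*Complex.I) * v 8 = 0 := by
      have aux : ((pTheta θ : ℂ))*v 0 + (0)*v 1 + (0)*v 2 + (0)*v 3 + (-Complex.exp ((θ:ℂ)*Complex.I))*v 4 + (0)*v 5 + (0)*v 6 + (0)*v 7 + (-Complex.exp (-(θ:ℂ)*Complex.I))*v 8 = 0 := rowext _ v hv 0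
      linear_combination aux
    have ru0 : (pTheta τ : ℂ) * v 0 - Complex.exp ((τ:ℂ)*Complex.I) * v 4 - Complex.exp (-(τ:ℂ)*Complex.I) * v 8 = 0 := by
      have aux : ((pTheta τ : ℂ))*v 0 + (0)*v 1 + (0)*v 2 + (0)*v 3 + (-Complex.exp ((τ:ℂ)*Complex.I))*v 4 + (0)*v 5 + (0)*v 6 + (0)*v 7 + (-Complex.exp (-(τ:ℂ)*Complex.I))*v 8 = 0 := rowext _ v hw 0
      linear_combination aux
    have rt2 : (b:ℂ) * v 2 - Complex.exp ((θ:ℂ)*Complex.I) * v 6 = 0 := by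
      have aux : (0)*v 0 + (0)*v 1 + ((b:ℂ))*v 2 + (0)*v 3 + (0)*v 4 + (0)*v 5 + (-Complex.exp ((θ:ℂ)*Complex.I))*v 6 + (0)*v 7 + (0)*v 8 = 0 := rowext _ v hv 2
      linear_combination aux
    have ru2 : (c:ℂ) * v 2 - Complex.exp ((τ:ℂ)*Complex.I) * v 6 = 0 := by
      have aux : (0)*v 0 + (0)*v 1 + ((c:ℂ))*v 2 + (0)*v 3 + (0)*v 4 + (0)*v 5 + (-Complex.exp ((τ:ℂ)*Complex.I))*v 6 + (0)*v 7 + (0)*v 8 = 0 := rowext _ v hw 2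
      linear_combination aux
    have rt3 : -(Complex.exp ((θ:ℂ)*Complex.I) * v 1) + (b:ℂ) * v 3 = 0 := by
      have aux : (0)*v 0 + (-Complex.exp ((θ:ℂ)*Complex.I))*v 1 + (0)*v 2 + ((b:ℂ))*v 3 + (0)*v 4 + (0)*v 5 + (0)*v 6 + (0)*v 7 + (0)*v 8 = 0 := rowext _ v hv 3
      linear_combination aux
    have ru3 : -(Complex.exp ((τ:ℂ)*Complex.I) * v 1) + (c:ℂ) * v 3 = 0 := by
      have aux : (0)*v 0 + (-Complex.exp ((τ:ℂ)*Complex.I))*v 1 + (0)*v 2 + ((c:ℂ))*v 3 + (0)*v 4 + (0)*v 5 + (0)*v 6 + (0)*v 7 + (0)*v 8 = 0 := rowext _ v hw 3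
      linear_combination aux
    have rt4 : -(Complex.exp (-(θ:ℂ)*Complex.I) * v 0) + (pTheta θ : ℂ) * v 4 - Complex.exp ((θ:ℂ)*Complex.I) * v 8 = 0 := by
      have aux : (-Complex.exp (-(θ:ℂ)*Complex.I))*v 0 + (0)*v 1 + (0)*v 2 + (0)*v 3 + ((pTheta θ : ℂ))*v 4 + (0)*v 5 + (0)*v 6 + (0)*v 7 + (-Complex.exp ((θ:ℂ)*Complex.I))*v 8 = 0 := rowext _ v hv 4
      linear_combination aux
    have ru4 : -(Complex.exp (-(τ:ℂ)*Complex.I) * v 0) + (pTheta τ : ℂ) * v 4 - Complex.exp ((τ:ℂ)*Complex.I) * v 8 = 0 := by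
      have aux : (-Complex.exp (-(τ:ℂ)*Complex.I))*v 0 + (0)*v 1 + (0)*v 2 + (0)*v 3 + ((pTheta τ : ℂ))*v 4 + (0)*v 5 + (0)*v 6 + (0)*v 7 + (-Complex.exp ((τ:ℂ)*Complex.I))*v 8 = 0 := rowext _ v hw 4
      linear_combination aux
    have rt7 : -(Complex.exp ((θ:ℂ)*Complex.I) * v 5) + (b:ℂ) * v 7 = 0 := by
      have aux : (0)*v 0 + (0)*v 1 + (0)*v 2 + (0)*v 3 + (0)*v 4 + (-Complex.exp ((θ:ℂ)*Complex.I))*v 5 + (0)*v 6 + ((b:ℂ))*v 7 + (0)*v 8 = 0 := rowext _ v hv 7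
      linear_combination aux
    have ru7 : -(Complex.exp ((τ:ℂ)*Complex.I) * v 5) + (c:ℂ) * v 7 = 0 := by
      have aux : (0)*v 0 + (0)*v 1 + (0)*v 2 + (0)*v 3 + (0)*v 4 + (-Complex.exp ((τ:ℂ)*Complex.I))*v 5 + (0)*v 6 + ((c:ℂ))*v 7 + (0)*v 8 = 0 := rowext _ v hw 7
      linear_combination aux
    have rt8 : -(Complex.exp ((θ:ℂ)*Complex.I) * v 0) - Complex.exp (-(θ:ℂ)*Complex.I) * v 4 + (pTheta θ : ℂ) * v 8 = 0 := by
      have aux : (-Complex.exp ((θ:ℂ)*Complex.I))*v 0 + (0)*v 1 + (0)*v 2 + (0)*v 3 + (-Complex.exp (-(θ:ℂ)*Complex.I))*v 4 + (0)*v 5 + (0)*v 6 + (0)*v 7 + ((pTheta θ : ℂ))*v 8 = 0 := rowext _ v hv 8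
      linear_combination aux
    have ru8 : -(Complex.exp ((τ:ℂ)*Complex.I) * v 0) - Complex.exp (-(τ:ℂ)*Complex.I) * v 4 + (pTheta τ : ℂ) * v 8 = 0 := by
      have aux : (-Complex.exp ((τ:ℂ)*Complex.I))*v 0 + (0)*v 1 + (0)*v 2 + (0)*v 3 + (-Complex.exp (-(τ:ℂ)*Complex.I))*v 4 + (0)*v 5 + (0)*v 6 + (0)*v 7 + ((pTheta τ : ℂ))*v 8 = 0 := rowext _ v hw 8
      linear_combination aux
    have hDne : (b:ℂ)*Complex.exp ((τ:ℂ)*Complex.I) - (c:ℂ)*Complex.exp ((θ:ℂ)*Complex.I) ≠ 0 :=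
      sub_ne_zero.mpr (expne hb hc (fun hh => hne hh.symm) (by linarith) (by linarith))
    have hv3 : v 3 = 0 := by
      have h : ((b:ℂ)*Complex.exp ((τ:ℂ)*Complex.I) - (c:ℂ)*Complex.exp ((θ:ℂ)*Complex.I)) * v 3 = 0 := by
        linear_combination Complex.exp ((τ:ℂ)*Complex.I)*rt3 - Complex.exp ((θ:ℂ)*Complex.I)*ru3
      exact (mul_eq_zero.mp h).resolve_left hDne
    have hv1 : v 1 = 0 := by
      have h : Complex.exp ((θ:ℂ)*Complex.I) * v 1 = 0 := by linear_combination -rt3 + (b:ℂ)*hv3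
      exact (mul_eq_zero.mp h).resolve_left (Complex.exp_ne_zero _)
    have hv6 : v 6 = 0 := by
      have h : ((b:ℂ)*Complex.exp ((τ:ℂ)*Complex.I) - (c:ℂ)*Complex.exp ((θ:ℂ)*Complex.I)) * v 6 = 0 := by
        linear_combination (c:ℂ)*rt2 - (b:ℂ)*ru2
      exact (mul_eq_zero.mp h).resolve_left hDne
    have hv2 : v 2 = 0 := by
      have h : (b:ℂ) * v 2 = 0 := by linear_combination rt2 + Complex.exp ((θ:ℂ)*Complex.I)*hv6
      exact (mul_eq_zero.mp h).resolve_left (Complex.ofReal_ne_zero.mpr hb.ne')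
    have hv7 : v 7 = 0 := by
      have h : ((b:ℂ)*Complex.exp ((τ:ℂ)*Complex.I) - (c:ℂ)*Complex.exp ((θ:ℂ)*Complex.I)) * v 7 = 0 := by
        linear_combination Complex.exp ((τ:ℂ)*Complex.I)*rt7 - Complex.exp ((θ:ℂ)*Complex.I)*ru7
      exact (mul_eq_zero.mp h).resolve_left hDne
    have hv5 : v 5 = 0 := by
      have h : Complex.exp ((θ:ℂ)*Complex.I) * v 5 = 0 := by linear_combination -rt7 + (b:ℂ)*hv7
      exact (mul_eq_zero.mp h).resolve_left (Complex.exp_ne_zero _)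
    obtain ⟨c0t, c1t, c2t⟩ := comboA rt0 rt4 rt8
    obtain ⟨c0u, c1u, c2u⟩ := comboA ru0 ru4 ru8
    rw [castI0 θ] at c0t
    rw [castI0 τ] at c0u
    rw [castI1 θ] at c1t
    rw [castI1 τ] at c1u
    rw [castI2 θ] at c2t
    rw [castI2 τ] at c2u
    have A0 : v 0 + v 4 + v 8 = 0 := by
      rcases K0 with k | k
      · exact (mul_eq_zero.mp c0t).resolve_left (Complex.ofReal_ne_zero.mpr k.ne')
      · exact (mul_eq_zero.mp c0u).resolve_left (Complex.ofReal_ne_zero.mpr k.ne')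
    have A1 : v 0 + om^2*v 4 + om*v 8 = 0 := by
      rcases K1 with k | k
      · exact (mul_eq_zero.mp c1t).resolve_left (Complex.ofReal_ne_zero.mpr k.ne')
      · exact (mul_eq_zero.mp c1u).resolve_left (Complex.ofReal_ne_zero.mpr k.ne')
    have A2 : v 0 + om*v 4 + om^2*v 8 = 0 := by
      rcases K2 with k | k
      · exact (mul_eq_zero.mp c2t).resolve_left (Complex.ofReal_ne_zero.mpr k.ne')
      · exact (mul_eq_zero.mp c2u).resolve_left (Complex.ofReal_ne_zero.mpr k.ne')
    obtain ⟨hv0, hv4, hv8⟩ := solveA A0 A1 A2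
    funext i
    fin_cases i
    exacts [hv0, hv1, hv2, hv3, hv4, hv5, hv6, hv7, hv8]
  · intro l hl0 hl1
    have hm0 : (0:ℝ) < 1 - l := by linarith
    have hker : ∀ v : Fin 9 → ℂ,
        ((l : ℂ) • rho b θ + ((1 - l : ℝ) : ℂ) • rho c τ).mulVec v = 0 → v = 0 := by
      intro v hv
      have R0 : ((l:ℂ)*(pTheta θ : ℂ) + ((1 - l : ℝ):ℂ)*(pTheta τ : ℂ))*v 0 - ((l:ℂ)*Complex.exp ((θ:ℂ)*Complex.I) + ((1 - l : ℝ):ℂ)*Complex.exp ((τ:ℂ)*Complex.I))*v 4 - ((l:ℂ)*Complex.exp (-(θ:ℂ)*Complex.I) + ((1 - l : ℝ):ℂ)*Complex.exp (-(τ:ℂ)*Complex.I))*v 8 = 0 := by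
        have aux : ((l:ℂ)*((pTheta θ : ℂ)) + ((1 - l : ℝ):ℂ)*((pTheta τ : ℂ)))*v 0 + ((l:ℂ)*(0) + ((1 - l : ℝ):ℂ)*(0))*v 1 + ((l:ℂ)*(0) + ((1 - l : ℝ):ℂ)*(0))*v 2 + ((l:ℂ)*(0) + ((1 - l : ℝ):ℂ)*(0))*v 3 + ((l:ℂ)*(-Complex.exp ((θ:ℂ)*Complex.I)) + ((1 - l : ℝ):ℂ)*(-Complex.exp ((τ:ℂ)*Complex.I)))*v 4 + ((l:ℂ)*(0) + ((1 - l : ℝ):ℂ)*(0))*v 5 + ((l:ℂ)*(0) + ((1 - l : ℝ):ℂ)*(0))*v 6 + ((l:ℂ)*(0) + ((1 - l : ℝ):ℂ)*(0))*v 7 + ((l:ℂ)*(-Complex.exp (-(θ:ℂ)*Complex.I)) + ((1 - l : ℝ):ℂ)*(-Complex.exp (-(τ:ℂ)*Complex.I)))*v 8 = 0 := rowext _ v hv 0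
        linear_combination aux
      have R1 : ((l:ℂ)*(1/(b:ℂ)) + ((1 - l : ℝ):ℂ)*(1/(c:ℂ)))*v 1 - ((l:ℂ)*Complex.exp (-(θ:ℂ)*Complex.I) + ((1 - l : ℝ):ℂ)*Complex.exp (-(τ:ℂ)*Complex.I))*v 3 = 0 := by
        have aux : ((l:ℂ)*(0) + ((1 - l : ℝ):ℂ)*(0))*v 0 + ((l:ℂ)*(1/(b:ℂ)) + ((1 - l : ℝ):ℂ)*(1/(c:ℂ)))*v 1 + ((l:ℂ)*(0) + ((1 - l : ℝ):ℂ)*(0))*v 2 + ((l:ℂ)*(-Complex.exp (-(θ:ℂ)*Complex.I)) + ((1 - l : ℝ):ℂ)*(-Complex.exp (-(τ:ℂ)*Complex.I)))*v 3 + ((l:ℂ)*(0) + ((1 - l : ℝ):ℂ)*(0))*v 4 + ((l:ℂ)*(0) + ((1 - l : ℝ):ℂ)*(0))*v 5 + ((l:ℂ)*(0) + ((1 - l : ℝ):ℂ)*(0))*v 6 + ((l:ℂ)*(0) + ((1 - l : ℝ):ℂ)*(0))*v 7 + ((l:ℂ)*(0) + ((1 - l : ℝ):ℂ)*(0))*v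 8 = 0 := rowext _ v hv 1
        linear_combination aux
      have R2 : ((l:ℂ)*(b:ℂ) + ((1 - l : ℝ):ℂ)*(c:ℂ))*v 2 - ((l:ℂ)*Complex.exp ((θ:ℂ)*Complex.I) + ((1 - l : ℝ):ℂ)*Complex.exp ((τ:ℂ)*Complex.I))*v 6 = 0 := by
        have aux : ((l:ℂ)*(0) + ((1 - l : ℝ):ℂ)*(0))*v 0 + ((l:ℂ)*(0) + ((1 - l : ℝ):ℂ)*(0))*v 1 + ((l:ℂ)*((b:ℂ)) + ((1 - l : ℝ):ℂ)*((c:ℂ)))*v 2 + ((l:ℂ)*(0) + ((1 - l : ℝ):ℂ)*(0))*v 3 + ((l:ℂ)*(0) + ((1 - l : ℝ):ℂ)*(0))*v 4 + ((l:ℂ)*(0) + ((1 - l : ℝ):ℂ)*(0))*v 5 + ((l:ℂ)*(-Complex.exp ((θ:ℂ)*Complex.I)) + ((1 - l : ℝ):ℂ)*(-Complex.exp ((τ:ℂ)*Complex.I)))*v 6 + ((l:ℂ)*(0) + ((1 - l : ℝ):ℂ)*(0))*v 7 + ((l:ℂ)*(0) + ((1 - l : ℝ):ℂ)*(0))*v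 8 = 0 := rowext _ v hv 2
        linear_combination aux
      have R3 : -(((l:ℂ)*Complex.exp ((θ:ℂ)*Complex.I) + ((1 - l : ℝ):ℂ)*Complex.exp ((τ:ℂ)*Complex.I))*v 1) + ((l:ℂ)*(b:ℂ) + ((1 - l : ℝ):ℂ)*(c:ℂ))*v 3 = 0 := by
        have aux : ((l:ℂ)*(0) + ((1 - l : ℝ):ℂ)*(0))*v 0 + ((l:ℂ)*(-Complex.exp ((θ:ℂ)*Complex.I)) + ((1 - l : ℝ):ℂ)*(-Complex.exp ((τ:ℂ)*Complex.I)))*v 1 + ((l:ℂ)*(0) + ((1 - l : ℝ):ℂ)*(0))*v 2 + ((l:ℂ)*((b:ℂ)) + ((1 - l : ℝ):ℂ)*((c:ℂ)))*v 3 + ((l:ℂ)*(0) + ((1 - l : ℝ):ℂ)*(0))*v 4 + ((l:ℂ)*(0) + ((1 - l : ℝ):ℂ)*(0))*v 5 + ((l:ℂ)*(0) + ((1 - l : ℝ):ℂ)*(0))*v 6 + ((l:ℂ)*(0) + ((1 - l : ℝ):ℂ)*(0))*v 7 + ((l:ℂ)*(0) + ((1 - l : ℝ):ℂ)*(0))*v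 8 = 0 := rowext _ v hv 3
        linear_combination aux
      have R4 : -(((l:ℂ)*Complex.exp (-(θ:ℂ)*Complex.I) + ((1 - l : ℝ):ℂ)*Complex.exp (-(τ:ℂ)*Complex.I))*v 0) + ((l:ℂ)*(pTheta θ : ℂ) + ((1 - l : ℝ):ℂ)*(pTheta τ : ℂ))*v 4 - ((l:ℂ)*Complex.exp ((θ:ℂ)*Complex.I) + ((1 - l : ℝ):ℂ)*Complex.exp ((τ:ℂ)*Complex.I))*v 8 = 0 := by
        have aux : ((l:ℂ)*(-Complex.exp (-(θ:ℂ)*Complex.I)) + ((1 - l : ℝ):ℂ)*(-Complex.exp (-(τ:ℂ)*Complex.I)))*v 0 + ((l:ℂ)*(0) + ((1 - l : ℝ):ℂ)*(0))*v 1 + ((l:ℂ)*(0) + ((1 - l : ℝ):ℂ)*(0))*v 2 + ((l:ℂ)*(0) + ((1 - l : ℝ):ℂ)*(0))*v 3 + ((l:ℂ)*((pTheta θ : ℂ)) + ((1 - l : ℝ):ℂ)*((pTheta τ : ℂ)))*v 4 + ((l:ℂ)*(0) + ((1 - l : ℝ):ℂ)*(0))*v 5 + ((l:ℂ)*(0)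 + ((1 - l : ℝ):ℂ)*(0))*v 6 + ((l:ℂ)*(0) + ((1 - l : ℝ):ℂ)*(0))*v 7 + ((l:ℂ)*(-Complex.exp ((θ:ℂ)*Complex.I)) + ((1 - l : ℝ):ℂ)*(-Complex.exp ((τ:ℂ)*Complex.I)))*v 8 = 0 := rowext _ v hv 4
        linear_combination aux
      have R5 : ((l:ℂ)*(1/(b:ℂ)) + ((1 - l : ℝ):ℂ)*(1/(c:ℂ)))*v 5 - ((l:ℂ)*Complex.exp (-(θ:ℂ)*Complex.I) + ((1 - l : ℝ):ℂ)*Complex.exp (-(τ:ℂ)*Complex.I))*v 7 = 0 := by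
        have aux : ((l:ℂ)*(0) + ((1 - l : ℝ):ℂ)*(0))*v 0 + ((l:ℂ)*(0) + ((1 - l : ℝ):ℂ)*(0))*v 1 + ((l:ℂ)*(0) + ((1 - l : ℝ):ℂ)*(0))*v 2 + ((l:ℂ)*(0) + ((1 - l : ℝ):ℂ)*(0))*v 3 + ((l:ℂ)*(0) + ((1 - l : ℝ):ℂ)*(0))*v 4 + ((l:ℂ)*(1/(b:ℂ)) + ((1 - l : ℝ):ℂ)*(1/(c:ℂ)))*v 5 + ((l:ℂ)*(0) + ((1 - l : ℝ):ℂ)*(0))*v 6 + ((l:ℂ)*(-Complex.exp (-(θ:ℂ)*Complex.I)) + ((1 - l : ℝ):ℂ)*(-Complex.exp (-(τ:ℂ)*Complex.I)))*v 7 + ((l:ℂ)*(0) + ((1 - l : ℝ):ℂ)*(0))*v 8 = 0 := rowext _ v hv 5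
        linear_combination aux
      have R6 : -(((l:ℂ)*Complex.exp (-(θ:ℂ)*Complex.I) + ((1 - l : ℝ):ℂ)*Complex.exp (-(τ:ℂ)*Complex.I))*v 2) + ((l:ℂ)*(1/(b:ℂ)) + ((1 - l : ℝ):ℂ)*(1/(c:ℂ)))*v 6 = 0 := by
        have aux : ((l:ℂ)*(0) + ((1 - l : ℝ):ℂ)*(0))*v 0 + ((l:ℂ)*(0) + ((1 - l : ℝ):ℂ)*(0))*v 1 + ((l:ℂ)*(-Complex.exp (-(θ:ℂ)*Complex.I)) + ((1 - l : ℝ):ℂ)*(-Complex.exp (-(τ:ℂ)*Complex.I)))*v 2 + ((l:ℂ)*(0) + ((1 - l : ℝ):ℂ)*(0))*v 3 + ((l:ℂ)*(0) + ((1 - l : ℝ):ℂ)*(0))*v 4 + ((l:ℂ)*(0) + ((1 - l : ℝ):ℂ)*(0))*v 5 + ((l:ℂ)*(1/(b:ℂ)) + ((1 - l : ℝ):ℂ)*(1/(c:ℂ)))*v 6 + ((l:ℂ)*(0) + ((1 - l : ℝ):ℂ)*(0))*v 7 + ((l:ℂ)*(0) + ((1 - l : ℝ):ℂ)*(0))*v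 8 = 0 := rowext _ v hv 6
        linear_combination aux
      have R7 : -(((l:ℂ)*Complex.exp ((θ:ℂ)*Complex.I) + ((1 - l : ℝ):ℂ)*Complex.exp ((τ:ℂ)*Complex.I))*v 5) + ((l:ℂ)*(b:ℂ) + ((1 - l : ℝ):ℂ)*(c:ℂ))*v 7 = 0 := by
        have aux : ((l:ℂ)*(0) + ((1 - l : ℝ):ℂ)*(0))*v 0 + ((l:ℂ)*(0) + ((1 - l : ℝ):ℂ)*(0))*v 1 + ((l:ℂ)*(0) + ((1 - l : ℝ):ℂ)*(0))*v 2 + ((l:ℂ)*(0) + ((1 - l : ℝ):ℂ)*(0))*v 3 + ((l:ℂ)*(0) + ((1 - l : ℝ):ℂ)*(0))*v 4 + ((l:ℂ)*(-Complex.exp ((θ:ℂ)*Complex.I)) + ((1 - l : ℝ):ℂ)*(-Complex.exp ((τ:ℂ)*Complex.I)))*v 5 + ((l:ℂ)*(0) + ((1 - l : ℝ):ℂ)*(0))*v 6 + ((l:ℂ)*((b:ℂ)) + ((1 - l : ℝ):ℂ)*((c:ℂ)))*v 7 + ((l:ℂ)*(0) + ((1 - l : ℝ):ℂ)*(0))*v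 8 = 0 := rowext _ v hv 7
        linear_combination aux
      have R8 : -(((l:ℂ)*Complex.exp ((θ:ℂ)*Complex.I) + ((1 - l : ℝ):ℂ)*Complex.exp ((τ:ℂ)*Complex.I))*v 0) - ((l:ℂ)*Complex.exp (-(θ:ℂ)*Complex.I) + ((1 - l : ℝ):ℂ)*Complex.exp (-(τ:ℂ)*Complex.I))*v 4 + ((l:ℂ)*(pTheta θ : ℂ) + ((1 - l : ℝ):ℂ)*(pTheta τ : ℂ))*v 8 = 0 := by
        have aux : ((l:ℂ)*(-Complex.exp ((θ:ℂ)*Complex.I)) + ((1 - l : ℝ):ℂ)*(-Complex.exp ((τ:ℂ)*Complex.I)))*v 0 + ((l:ℂ)*(0) + ((1 - l : ℝ):ℂ)*(0))*v 1 + ((l:ℂ)*(0) + ((1 - l : ℝ):ℂ)*(0))*v 2 + ((l:ℂ)*(0) + ((1 - l : ℝ):ℂ)*(0))*v 3 + ((l:ℂ)*(-Complex.exp (-(θ:ℂ)*Complex.I)) + ((1 - l : ℝ):ℂ)*(-Complex.exp (-(τ:ℂ)*Complex.I)))*v 4 + ((l:ℂ)*(0) + ((1 - l : ℝ):ℂ)*(0))*v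 5 + ((l:ℂ)*(0) + ((1 - l : ℝ):ℂ)*(0))*v 6 + ((l:ℂ)*(0) + ((1 - l : ℝ):ℂ)*(0))*v 7 + ((l:ℂ)*((pTheta θ : ℂ)) + ((1 - l : ℝ):ℂ)*((pTheta τ : ℂ)))*v 8 = 0 := rowext _ v hv 8
        linear_combination aux
      have hfe1 : Complex.exp (-(θ:ℂ)*Complex.I) * Complex.exp ((θ:ℂ)*Complex.I) = 1 := by
        rw [← Complex.exp_add, show -(θ:ℂ)*Complex.I + (θ:ℂ)*Complex.I = 0 by ring,
          Complex.exp_zero]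
      have hfe2 : Complex.exp (-(τ:ℂ)*Complex.I) * Complex.exp ((τ:ℂ)*Complex.I) = 1 := by
        rw [← Complex.exp_add, show -(τ:ℂ)*Complex.I + (τ:ℂ)*Complex.I = 0 by ring,
          Complex.exp_zero]
      have hc1 : Complex.exp (-(θ:ℂ)*Complex.I) * Complex.exp ((τ:ℂ)*Complex.I) = Complex.exp (-((θ - τ : ℝ):ℂ)*Complex.I) := by
        rw [← Complex.exp_add]; congr 1; push_cast; ring
      have hc2 : Complex.exp (-(τ:ℂ)*Complex.I) * Complex.exp ((θ:ℂ)*Complex.I) = Complex.exp (((θ - τ : ℝ):ℂ)*Complex.I) := by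
        rw [← Complex.exp_add]; congr 1; push_cast; ring
      have hcross : Complex.exp (-(θ:ℂ)*Complex.I) * Complex.exp ((τ:ℂ)*Complex.I) + Complex.exp (-(τ:ℂ)*Complex.I) * Complex.exp ((θ:ℂ)*Complex.I) = ((2*Real.cos (θ - τ) : ℝ):ℂ) := by
        rw [hc1, hc2]; linear_combination twocos (θ - τ)
      have hDcast : ((l:ℂ)*(1/(b:ℂ)) + ((1 - l : ℝ):ℂ)*(1/(c:ℂ)))*((l:ℂ)*(b:ℂ) + ((1 - l : ℝ):ℂ)*(c:ℂ)) - ((l:ℂ)*Complex.exp (-(θ:ℂ)*Complex.I) + ((1 - l : ℝ):ℂ)*Complex.exp (-(τ:ℂ)*Complex.I))*((l:ℂ)*Complex.exp ((θ:ℂ)*Complex.I) + ((1 - l : ℝ):ℂ)*Complex.exp ((τ:ℂ)*Complex.I))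
          = (((l*(1/b) + (1-l)*(1/c))*(l*b + (1-l)*c)
              - (l^2 + (1-l)^2 + 2*l*(1-l)*Real.cos (θ - τ)) : ℝ):ℂ) := by
        linear_combination (norm := (push_cast; ring1))
          (-(l:ℂ)^2)*hfe1 - ((1 - l : ℝ):ℂ)^2*hfe2 - (l:ℂ)*((1 - l : ℝ):ℂ)*hcross
      have hDpos : (0:ℝ) < (l*(1/b) + (1-l)*(1/c))*(l*b + (1-l)*c)
          - (l^2 + (1-l)^2 + 2*l*(1-l)*Real.cos (θ - τ)) := by
        have hreal : (l*(1/b) + (1-l)*(1/c))*(l*b + (1-l)*c)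
            = l^2 + (1-l)^2 + l*(1-l)*(b/c + c/b) := by
          field_simp; ring
        have hbc : 2 ≤ b/c + c/b := by
          rw [div_add_div _ _ hc.ne' hb.ne', le_div_iff₀ (mul_pos hc hb)]
          nlinarith [sq_nonneg (b-c)]
        have hcos : Real.cos (θ - τ) < 1 :=
          coslt1 (sub_ne_zero.mpr hne) (by linarith) (by linarith)
        have hprod : (0:ℝ) < l*(1-l)*(b/c + c/b - 2*Real.cos (θ - τ)) :=
          mul_pos (mul_pos hl0 hm0) (by linarith)
        have expand : (l^2 + (1-l)^2 + l*(1-l)*(b/c + c/b))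
            - (l^2 + (1-l)^2 + 2*l*(1-l)*Real.cos (θ - τ))
            = l*(1-l)*(b/c + c/b - 2*Real.cos (θ - τ)) := by ring
        rw [hreal, expand]; exact hprod
      have hDne : ((l:ℂ)*(1/(b:ℂ)) + ((1 - l : ℝ):ℂ)*(1/(c:ℂ)))*((l:ℂ)*(b:ℂ) + ((1 - l : ℝ):ℂ)*(c:ℂ)) - ((l:ℂ)*Complex.exp (-(θ:ℂ)*Complex.I) + ((1 - l : ℝ):ℂ)*Complex.exp (-(τ:ℂ)*Complex.I))*((l:ℂ)*Complex.exp ((θ:ℂ)*Complex.I) + ((1 - l : ℝ):ℂ)*Complex.exp ((τ:ℂ)*Complex.I)) ≠ 0 := by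
        rw [hDcast]; exact Complex.ofReal_ne_zero.mpr hDpos.ne'
      have hv1 : v 1 = 0 := by
        have h : (((l:ℂ)*(1/(b:ℂ)) + ((1 - l : ℝ):ℂ)*(1/(c:ℂ)))*((l:ℂ)*(b:ℂ) + ((1 - l : ℝ):ℂ)*(c:ℂ)) - ((l:ℂ)*Complex.exp (-(θ:ℂ)*Complex.I) + ((1 - l : ℝ):ℂ)*Complex.exp (-(τ:ℂ)*Complex.I))*((l:ℂ)*Complex.exp ((θ:ℂ)*Complex.I) + ((1 - l : ℝ):ℂ)*Complex.exp ((τ:ℂ)*Complex.I))) * v 1 = 0 := by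
          linear_combination ((l:ℂ)*(b:ℂ) + ((1 - l : ℝ):ℂ)*(c:ℂ))*R1 + ((l:ℂ)*Complex.exp (-(θ:ℂ)*Complex.I) + ((1 - l : ℝ):ℂ)*Complex.exp (-(τ:ℂ)*Complex.I))*R3
        exact (mul_eq_zero.mp h).resolve_left hDne
      have hv3 : v 3 = 0 := by
        have h : (((l:ℂ)*(1/(b:ℂ)) + ((1 - l : ℝ):ℂ)*(1/(c:ℂ)))*((l:ℂ)*(b:ℂ) + ((1 - l : ℝ):ℂ)*(c:ℂ)) - ((l:ℂ)*Complex.exp (-(θ:ℂ)*Complex.I) + ((1 - l : ℝ):ℂ)*Complex.exp (-(τ:ℂ)*Complex.I))*((l:ℂ)*Complex.exp ((θ:ℂ)*Complex.I) + ((1 - l : ℝ):ℂ)*Complex.exp ((τ:ℂ)*Complex.I))) * v 3 = 0 := by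
          linear_combination ((l:ℂ)*Complex.exp ((θ:ℂ)*Complex.I) + ((1 - l : ℝ):ℂ)*Complex.exp ((τ:ℂ)*Complex.I))*R1 + ((l:ℂ)*(1/(b:ℂ)) + ((1 - l : ℝ):ℂ)*(1/(c:ℂ)))*R3
        exact (mul_eq_zero.mp h).resolve_left hDne
      have hv2 : v 2 = 0 := by
        have h : (((l:ℂ)*(1/(b:ℂ)) + ((1 - l : ℝ):ℂ)*(1/(c:ℂ)))*((l:ℂ)*(b:ℂ) + ((1 - l : ℝ):ℂ)*(c:ℂ)) - ((l:ℂ)*Complex.exp (-(θ:ℂ)*Complex.I) + ((1 - l : ℝ):ℂ)*Complex.exp (-(τ:ℂ)*Complex.I))*((l:ℂ)*Complex.exp ((θ:ℂ)*Complex.I) + ((1 - l : ℝ):ℂ)*Complex.exp ((τ:ℂ)*Complex.I))) * v 2 = 0 := by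
          linear_combination ((l:ℂ)*(1/(b:ℂ)) + ((1 - l : ℝ):ℂ)*(1/(c:ℂ)))*R2 + ((l:ℂ)*Complex.exp ((θ:ℂ)*Complex.I) + ((1 - l : ℝ):ℂ)*Complex.exp ((τ:ℂ)*Complex.I))*R6
        exact (mul_eq_zero.mp h).resolve_left hDne
      have hv6 : v 6 = 0 := by
        have h : (((l:ℂ)*(1/(b:ℂ)) + ((1 - l : ℝ):ℂ)*(1/(c:ℂ)))*((l:ℂ)*(b:ℂ) + ((1 - l : ℝ):ℂ)*(c:ℂ)) - ((l:ℂ)*Complex.exp (-(θ:ℂ)*Complex.I) + ((1 - l : ℝ):ℂ)*Complex.exp (-(τ:ℂ)*Complex.I))*((l:ℂ)*Complex.exp ((θ:ℂ)*Complex.I) + ((1 - l : ℝ):ℂ)*Complex.exp ((τ:ℂ)*Complex.I))) * v 6 = 0 := by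
          linear_combination ((l:ℂ)*Complex.exp (-(θ:ℂ)*Complex.I) + ((1 - l : ℝ):ℂ)*Complex.exp (-(τ:ℂ)*Complex.I))*R2 + ((l:ℂ)*(b:ℂ) + ((1 - l : ℝ):ℂ)*(c:ℂ))*R6
        exact (mul_eq_zero.mp h).resolve_left hDne
      have hv5 : v 5 = 0 := by
        have h : (((l:ℂ)*(1/(b:ℂ)) + ((1 - l : ℝ):ℂ)*(1/(c:ℂ)))*((l:ℂ)*(b:ℂ) + ((1 - l : ℝ):ℂ)*(c:ℂ)) - ((l:ℂ)*Complex.exp (-(θ:ℂ)*Complex.I) + ((1 - l : ℝ):ℂ)*Complex.exp (-(τ:ℂ)*Complex.I))*((l:ℂ)*Complex.exp ((θ:ℂ)*Complex.I) + ((1 - l : ℝ):ℂ)*Complex.exp ((τ:ℂ)*Complex.I))) * v 5 = 0 := by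
          linear_combination ((l:ℂ)*(b:ℂ) + ((1 - l : ℝ):ℂ)*(c:ℂ))*R5 + ((l:ℂ)*Complex.exp (-(θ:ℂ)*Complex.I) + ((1 - l : ℝ):ℂ)*Complex.exp (-(τ:ℂ)*Complex.I))*R7
        exact (mul_eq_zero.mp h).resolve_left hDne
      have hv7 : v 7 = 0 := by
        have h : (((l:ℂ)*(1/(b:ℂ)) + ((1 - l : ℝ):ℂ)*(1/(c:ℂ)))*((l:ℂ)*(b:ℂ) + ((1 - l : ℝ):ℂ)*(c:ℂ)) - ((l:ℂ)*Complex.exp (-(θ:ℂ)*Complex.I) + ((1 - l : ℝ):ℂ)*Complex.exp (-(τ:ℂ)*Complex.I))*((l:ℂ)*Complex.exp ((θ:ℂ)*Complex.I) + ((1 - l : ℝ):ℂ)*Complex.exp ((τ:ℂ)*Complex.I))) * v 7 = 0 := by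
          linear_combination ((l:ℂ)*Complex.exp ((θ:ℂ)*Complex.I) + ((1 - l : ℝ):ℂ)*Complex.exp ((τ:ℂ)*Complex.I))*R5 + ((l:ℂ)*(1/(b:ℂ)) + ((1 - l : ℝ):ℂ)*(1/(c:ℂ)))*R7
        exact (mul_eq_zero.mp h).resolve_left hDne
      obtain ⟨c0, c1, c2⟩ := comboA R0 R4 R8
      have hM0 : ((l:ℂ)*(pTheta θ : ℂ) + ((1 - l : ℝ):ℂ)*(pTheta τ : ℂ)) - ((l:ℂ)*Complex.exp ((θ:ℂ)*Complex.I) + ((1 - l : ℝ):ℂ)*Complex.exp ((τ:ℂ)*Complex.I)) - ((l:ℂ)*Complex.exp (-(θ:ℂ)*Complex.I) + ((1 - l : ℝ):ℂ)*Complex.exp (-(τ:ℂ)*Complex.I)) = ((l*L0 θ + (1-l)*L0 τ : ℝ):ℂ) := by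
        linear_combination (norm := (push_cast; ring1))
          (l:ℂ)*castI0 θ + ((1 - l : ℝ):ℂ)*castI0 τ
      have hM1 : ((l:ℂ)*(pTheta θ : ℂ) + ((1 - l : ℝ):ℂ)*(pTheta τ : ℂ)) - ((l:ℂ)*Complex.exp ((θ:ℂ)*Complex.I) + ((1 - l : ℝ):ℂ)*Complex.exp ((τ:ℂ)*Complex.I))*om - ((l:ℂ)*Complex.exp (-(θ:ℂ)*Complex.I) + ((1 - l : ℝ):ℂ)*Complex.exp (-(τ:ℂ)*Complex.I))*om^2 = ((l*L1 θ + (1-l)*L1 τ : ℝ):ℂ) := by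
        linear_combination (norm := (push_cast; ring1))
          (l:ℂ)*castI1 θ + ((1 - l : ℝ):ℂ)*castI1 τ
      have hM2 : ((l:ℂ)*(pTheta θ : ℂ) + ((1 - l : ℝ):ℂ)*(pTheta τ : ℂ)) - ((l:ℂ)*Complex.exp ((θ:ℂ)*Complex.I) + ((1 - l : ℝ):ℂ)*Complex.exp ((τ:ℂ)*Complex.I))*om^2 - ((l:ℂ)*Complex.exp (-(θ:ℂ)*Complex.I) + ((1 - l : ℝ):ℂ)*Complex.exp (-(τ:ℂ)*Complex.I))*om = ((l*L2 θ + (1-l)*L2 τ : ℝ):ℂ) := by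
        linear_combination (norm := (push_cast; ring1))
          (l:ℂ)*castI2 θ + ((1 - l : ℝ):ℂ)*castI2 τ
      rw [hM0] at c0
      rw [hM1] at c1
      rw [hM2] at c2
      have p0 : (0:ℝ) < l*L0 θ + (1-l)*L0 τ := by
        rcases K0 with k | k
        · nlinarith [mul_pos hl0 k, mul_nonneg hm0.le (L0_nonneg τ)]
        · nlinarith [mul_pos hm0 k, mul_nonneg hl0.le (L0_nonneg θ)]
      have p1 : (0:ℝ) < l*L1 θ + (1-l)*L1 τ := by
        rcases K1 with k | k
        · nlinarith [mul_pos hl0 k, mul_nonneg hm0.le (L1_nonneg τ)]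
        · nlinarith [mul_pos hm0 k, mul_nonneg hl0.le (L1_nonneg θ)]
      have p2 : (0:ℝ) < l*L2 θ + (1-l)*L2 τ := by
        rcases K2 with k | k
        · nlinarith [mul_pos hl0 k, mul_nonneg hm0.le (L2_nonneg τ)]
        · nlinarith [mul_pos hm0 k, mul_nonneg hl0.le (L2_nonneg θ)]
      have A0 := (mul_eq_zero.mp c0).resolve_left (Complex.ofReal_ne_zero.mpr p0.ne')
      have A1 := (mul_eq_zero.mp c1).resolve_left (Complex.ofReal_ne_zero.mpr p1.ne')
      have A2 := (mul_eq_zero.mp c2).resolve_left (Complex.ofReal_ne_zero.mpr p2.ne')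
      obtain ⟨hv0, hv4, hv8⟩ := solveA A0 A1 A2
      funext i
      fin_cases i
      exacts [hv0, hv1, hv2, hv3, hv4, hv5, hv6, hv7, hv8]
    have hdet : ((l : ℂ) • rho b θ + ((1 - l : ℝ) : ℂ) • rho c τ).det ≠ 0 := by
      intro h0
      obtain ⟨w, hw0, hw⟩ := Matrix.exists_mulVec_eq_zero_iff.mpr h0
      exact hw0 (hker w hw)
    have := Matrix.rank_of_isUnit ((l : ℂ) • rho b θ + ((1 - l : ℝ) : ℂ) • rho c τ)
      ((Matrix.isUnit_iff_isUnit_det _).mpr (isUnit_iff_ne_zero.mpr hdet))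
    simpa using this

theorem stmt11 (b c θ τ : ℝ) (hb : 0 < b) (hc : 0 < c)
    (h : ∃ i j : Fin 3, i ≠ j ∧ θ ∈ arcs i ∧ τ ∈ arcs j) :
    (∀ v : Fin 9 → ℂ, (rho b θ).mulVec v = 0 → (rho c τ).mulVec v = 0 → v = 0) ∧
    ∀ l : ℝ, 0 < l → l < 1 →
      ((l : ℂ) • rho b θ + ((1 - l : ℝ) : ℂ) • rho c τ).rank = 9 := by
  obtain ⟨i, j, hij, hθ, hτ⟩ := h
  have hpi := Real.pi_pos
  fin_cases i <;> fin_cases j <;>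
    simp only [arcs, Matrix.cons_val_zero, Matrix.cons_val_one, Matrix.head_cons,
      Matrix.cons_val_two, Matrix.tail_cons, ne_eq, not_true_eq_false,
      Set.mem_Ioo] at hij hθ hτ
  · -- i=0, j=1
    obtain ⟨hP0, hP2⟩ := arc0 (Set.mem_Ioo.mpr hθ)
    obtain ⟨hQ1, hQ2⟩ := arc1 (Set.mem_Ioo.mpr hτ)
    exact master b c θ τ hb hc hθ.1 (by linarith [hθ.2]) (by linarith [hτ.1]) (by linarith [hτ.2])
      (ne_of_lt (by linarith [hθ.2, hτ.1])) (Or.inl hP0) (Or.inr hQ1) (Or.inl hP2)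
  · -- i=0, j=2
    obtain ⟨hP0, hP2⟩ := arc0 (Set.mem_Ioo.mpr hθ)
    obtain ⟨hQ0, hQ1⟩ := arc2 (Set.mem_Ioo.mpr hτ)
    exact master b c θ τ hb hc hθ.1 (by linarith [hθ.2]) (by linarith [hτ.1]) hτ.2
      (ne_of_lt (by linarith [hθ.2, hτ.1])) (Or.inl hP0) (Or.inr hQ1) (Or.inl hP2)
  · -- i=1, j=0
    obtain ⟨hP1, hP2⟩ := arc1 (Set.mem_Ioo.mpr hθ)
    obtain ⟨hQ0, hQ2⟩ := arc0 (Set.mem_Ioo.mpr hτ)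
    exact master b c θ τ hb hc (by linarith [hθ.1]) (by linarith [hθ.2]) hτ.1 (by linarith [hτ.2])
      (ne_of_gt (by linarith [hθ.1, hτ.2])) (Or.inr hQ0) (Or.inl hP1) (Or.inl hP2)
  · -- i=1, j=2
    obtain ⟨hP1, hP2⟩ := arc1 (Set.mem_Ioo.mpr hθ)
    obtain ⟨hQ0, hQ1⟩ := arc2 (Set.mem_Ioo.mpr hτ)
    exact master b c θ τ hb hc (by linarith [hθ.1]) (by linarith [hθ.2]) (by linarith [hτ.1]) hτ.2
      (ne_of_lt (by linarith [hθ.2, hτ.1])) (Or.inr hQ0) (Or.inl hP1) (Or.inl hP2)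
  · -- i=2, j=0
    obtain ⟨hP0, hP1⟩ := arc2 (Set.mem_Ioo.mpr hθ)
    obtain ⟨hQ0, hQ2⟩ := arc0 (Set.mem_Ioo.mpr hτ)
    exact master b c θ τ hb hc (by linarith [hθ.1]) hθ.2 hτ.1 (by linarith [hτ.2])
      (ne_of_gt (by linarith [hθ.1, hτ.2])) (Or.inl hP0) (Or.inl hP1) (Or.inr hQ2)
  · -- i=2, j=1
    obtain ⟨hP0, hP1⟩ := arc2 (Set.mem_Ioo.mpr hθ)
    obtain ⟨hQ1, hQ2⟩ := arc1 (Set.mem_Ioo.mpr hτ)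
    exact master b c θ τ hb hc (by linarith [hθ.1]) hθ.2 (by linarith [hτ.1]) (by linarith [hτ.2])
      (ne_of_gt (by linarith [hθ.1, hτ.2])) (Or.inl hP0) (Or.inl hP1) (Or.inr hQ2)
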